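/- arXiv:2412.19873 — 3 statements merged into one kernel-verified Lean document; each statement's English description precedes it below -/
import Mathlib

section
/- Let R, p̃ be reals with R ≥ 0, p̃ > 0, R + p̃ ≤ 1, let H ≥ 1 and 1 ≤ h ≤ H be integers, and let A = [[1-p̃, p̃],[R, 1-R]] and r = (0,1)ᵀ. Then the vector V_h := ∑_{h'=h}^{H} A^{h'-h} r has first coordinate V_h(0) = (p̃/(R+p̃)) · ( (H-h+1) − (1−(1−R−p̃)^{H-h+1})/(R+p̃) ) and second coordinate V_h(1) = (1/(R+p̃)) · ( p̃(H-h+1) + R·(1−(1−R−p̃)^{H-h+1})/(R+p̃) ). -/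
lemma two_state_pow (R p : ℝ) (hs : R + p ≠ 0) (n : ℕ) :
    (!![1 - p, p; R, 1 - R] : Matrix (Fin 2) (Fin 2) ℝ) ^ n =
      !![(R + p * (1 - R - p) ^ n) / (R + p), p * (1 - (1 - R - p) ^ n) / (R + p);
         R * (1 - (1 - R - p) ^ n) / (R + p), (p + R * (1 - R - p) ^ n) / (R + p)] := by
  induction n with
  | zero =>
    simp only [pow_zero]
    ext i j
    fin_cases i <;> fin_cases j <;>
      simp [Matrix.one_apply] <;> (field_simp <;> ring)
  | succ n ih =>
    rw [pow_succ, ih]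
    ext i j
    fin_cases i <;> fin_cases j <;>
      · simp [Matrix.mul_apply, Fin.sum_univ_two, pow_succ]
        field_simp
        ring

/-- Closed form for the robust value function of the two-state hard instance:
with `A = [[1-p̃, p̃],[R, 1-R]]` and `r = (0,1)ᵀ`, the vector
`V_h = ∑_{h'=h}^{H} A^{h'-h} r` has the stated coordinates. -/
theorem two_state_value_closed_form (R p : ℝ) (hR : 0 ≤ R) (hp : 0 < p)
    (hle : R + p ≤ 1) (H h : ℕ) (h1 : 1 ≤ h) (hhH : h ≤ H) :
    (∑ i ∈ Finset.Icc h H,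
        ((!![1 - p, p; R, 1 - R] : Matrix (Fin 2) (Fin 2) ℝ) ^ (i - h)).mulVec ![0, 1]) 0
      = p / (R + p) * (((H : ℝ) - h + 1) - (1 - (1 - R - p) ^ (H - h + 1)) / (R + p)) ∧
    (∑ i ∈ Finset.Icc h H,
        ((!![1 - p, p; R, 1 - R] : Matrix (Fin 2) (Fin 2) ℝ) ^ (i - h)).mulVec ![0, 1]) 1
      = 1 / (R + p) * (p * ((H : ℝ) - h + 1)
          + R * (1 - (1 - R - p) ^ (H - h + 1)) / (R + p)) := by
  have hs : (0:ℝ) < R + p := by linarith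
  have hs' : R + p ≠ 0 := ne_of_gt hs
  set q : ℝ := 1 - R - p with hq
  have hq1 : q ≠ 1 := by simp [hq]; intro hc; linarith
  have hN : H + 1 - h = H - h + 1 := by omega
  have hgeom : ∑ j ∈ Finset.range (H - h + 1), q ^ j = (1 - q ^ (H - h + 1)) / (R + p) := by
    rw [geom_sum_eq hq1]
    rw [div_eq_div_iff (by simp [hq]; intro hc; linarith) hs']
    ring
  have hcast : ((H - h + 1 : ℕ) : ℝ) = (H : ℝ) - h + 1 := by
    push_cast [Nat.cast_sub hhH]
    ring
  constructor
  · rw [Finset.sum_apply]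
    have : ∀ i ∈ Finset.Icc h H,
        (((!![1 - p, p; R, 1 - R] : Matrix (Fin 2) (Fin 2) ℝ) ^ (i - h)).mulVec ![0, 1]) 0
          = p * (1 - q ^ (i - h)) / (R + p) := by
      intro i hi
      rw [two_state_pow R p hs']
      simp [Matrix.mulVec, dotProduct, Fin.sum_univ_two, hq]
    rw [Finset.sum_congr rfl this, ← Finset.Ico_add_one_right_eq_Icc, Finset.sum_Ico_eq_sum_range, hN]
    have h2 : ∀ j ∈ Finset.range (H - h + 1),
        p * (1 - q ^ (h + j - h)) / (R + p) = p / (R + p) - p / (R + p) * q ^ j := by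
      intro j _
      have : h + j - h = j := by omega
      rw [this]; ring
    rw [Finset.sum_congr rfl h2, Finset.sum_sub_distrib, Finset.sum_const, ← Finset.mul_sum,
      hgeom, Finset.card_range, nsmul_eq_mul, hcast]
    ring
  · rw [Finset.sum_apply]
    have : ∀ i ∈ Finset.Icc h H,
        (((!![1 - p, p; R, 1 - R] : Matrix (Fin 2) (Fin 2) ℝ) ^ (i - h)).mulVec ![0, 1]) 1
          = (p + R * q ^ (i - h)) / (R + p) := by
      intro i hi
      rw [two_state_pow R p hs']
      simp [Matrix.mulVec, dotProduct, Fin.sum_univ_two, hq]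
    rw [Finset.sum_congr rfl this, ← Finset.Ico_add_one_right_eq_Icc, Finset.sum_Ico_eq_sum_range, hN]
    have h2 : ∀ j ∈ Finset.range (H - h + 1),
        (p + R * q ^ (h + j - h)) / (R + p) = p / (R + p) + R / (R + p) * q ^ j := by
      intro j _
      have : h + j - h = j := by omega
      rw [this]; ring
    rw [Finset.sum_congr rfl h2, Finset.sum_add_distrib, Finset.sum_const, ← Finset.mul_sum,
      hgeom, Finset.card_range, nsmul_eq_mul, hcast]
    field_simp
end

section
/- Let V, V̄ : S → ℝ be functions on a finite state space, and suppose for each step h ∈ {1,…,H} we have maps satisfying V̄_h = ζ_h + r_h + P_h^{V̄_{h+1}} V̄_{h+1} and V_h = r_h + P_h^{V_{h+1}} V_{h+1}, with V̄_{H+1} = V_{H+1} = 0, where for each h the operator P_h^{W} is the worst-case transition for W over an R-contamination set (so P_h^{W} W ≤ P_h^{W'} W for all W, W'), and each P_h^W is a row-stochastic nonnegative matrix. Then entrywise, V̄_1 − V_1 ≤ ∑_{h=1}^H ∏_{j=1}^{h-1} P_j^{V_{j+1}} ζ_h. -/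
open Matrix

private lemma mulVec_mono' {S : Type*} [Fintype S] (M : Matrix S S ℝ)
    (hM : ∀ s s', 0 ≤ M s s') {u v : S → ℝ} (h : ∀ t, u t ≤ v t) (s : S) :
    M.mulVec u s ≤ M.mulVec v s := by
  unfold Matrix.mulVec dotProduct
  exact Finset.sum_le_sum fun t _ => mul_le_mul_of_nonneg_left (h t) (hM s t)

private lemma mulVec_sum' {S ι : Type*} [Fintype S] (M : Matrix S S ℝ) (F : Finset ι)
    (g : ι → S → ℝ) (s : S) :
    M.mulVec (fun t => ∑ k ∈ F, g k t) s = ∑ k ∈ F, M.mulVec (g k) s := by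
  unfold Matrix.mulVec dotProduct
  rw [Finset.sum_comm]
  simp [Finset.mul_sum]

/-- Error propagation for robust value iteration: if
`V̄_h = ζ_h + r_h + P_h^{V̄_{h+1}} V̄_{h+1}` and `V_h = r_h + P_h^{V_{h+1}} V_{h+1}`
with `V̄_{H+1} = V_{H+1} = 0`, where each `P_h^W` is a nonnegative row-stochastic
matrix minimizing `P ↦ P W` (so `P_h^W W ≤ P_h^{W'} W` entrywise for all `W, W'`),
then entrywise `V̄_1 − V_1 ≤ ∑_{h=1}^H (∏_{j=1}^{h-1} P_j^{V_{j+1}}) ζ_h`. -/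
theorem robust_value_error_propagation (S : Type*) [Fintype S] [DecidableEq S] (H : ℕ)
    (P : ℕ → (S → ℝ) → Matrix S S ℝ)
    (hPnonneg : ∀ h W s s', 0 ≤ P h W s s')
    (hProw : ∀ h W s, ∑ s', P h W s s' = 1)
    (hPworst : ∀ h (W W' : S → ℝ) s, (P h W).mulVec W s ≤ (P h W').mulVec W s)
    (Vbar V ζ r : ℕ → S → ℝ)
    (hVbarEnd : Vbar (H + 1) = 0) (hVEnd : V (H + 1) = 0)
    (hVbar : ∀ h, 1 ≤ h → h ≤ H →
      Vbar h = ζ h + r h + (P h (Vbar (h + 1))).mulVec (Vbar (h + 1)))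
    (hV : ∀ h, 1 ≤ h → h ≤ H →
      V h = r h + (P h (V (h + 1))).mulVec (V (h + 1))) :
    ∀ s, Vbar 1 s - V 1 s ≤
      ∑ h ∈ Finset.Icc 1 H,
        (((List.range (h - 1)).map (fun j => P (j + 1) (V (j + 2)))).prod.mulVec (ζ h)) s := by
  suffices key : ∀ n h, h + n = H + 1 → 1 ≤ h → ∀ s,
      Vbar h s - V h s ≤ ∑ k ∈ Finset.Icc h H,
        (((List.range (k - h)).map (fun j => P (j + h) (V (j + h + 1)))).prod.mulVec (ζ k)) s by
    intro s
    exact key H 1 (by omega) le_rfl s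
  intro n
  induction n with
  | zero =>
    intro h hh _ s
    have : h = H + 1 := by omega
    subst this
    rw [hVbarEnd, hVEnd, Finset.Icc_eq_empty (by omega)]
    simp
  | succ n ih =>
    intro h hh hh1 s
    have hhH : h ≤ H := by omega
    have ih' := ih (h + 1) (by omega) (by omega)
    -- step inequality
    have step : Vbar h s - V h s ≤ ζ h s +
        (P h (V (h + 1))).mulVec (fun t => Vbar (h + 1) t - V (h + 1) t) s := by
      rw [hVbar h hh1 hhH, hV h hh1 hhH]
      have h1 := hPworst h (Vbar (h + 1)) (V (h + 1)) s
      have h2 : (P h (V (h + 1))).mulVec (fun t => Vbar (h + 1) t - V (h + 1) t) s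
          = (P h (V (h + 1))).mulVec (Vbar (h + 1)) s
            - (P h (V (h + 1))).mulVec (V (h + 1)) s := by
        have := Matrix.mulVec_sub (P h (V (h + 1))) (Vbar (h + 1)) (V (h + 1))
        have := congrFun this s
        exact this
      simp only [Pi.add_apply]
      linarith
    -- monotone mulVec with ih'
    have mono := mulVec_mono' (P h (V (h + 1))) (fun s s' => hPnonneg h _ s s') ih' s
    rw [mulVec_sum'] at mono
    -- rewrite each summand
    have prodeq : ∀ k, h + 1 ≤ k →
        (P h (V (h + 1))).mulVec
          ((((List.range (k - (h + 1))).map (fun j => P (j + (h + 1)) (V (j + (h + 1) + 1)))).prod).mulVec (ζ k)) s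
        = (((List.range (k - h)).map (fun j => P (j + h) (V (j + h + 1)))).prod.mulVec (ζ k)) s := by
      intro k hk
      have hrange : k - h = (k - (h + 1)) + 1 := by omega
      rw [hrange, List.range_succ_eq_map, List.map_cons, List.prod_cons, List.map_map]
      have hfun : ((fun j => P (j + h) (V (j + h + 1))) ∘ Nat.succ)
          = fun j => P (j + (h + 1)) (V (j + (h + 1) + 1)) := by
        funext j
        have e1 : Nat.succ j + h = j + (h + 1) := by omega
        simp only [Function.comp]
        rw [e1]
      rw [hfun]
      rw [Matrix.mulVec_mulVec]
      norm_num
    have sum_eq : ∑ k ∈ Finset.Icc (h + 1) H,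
        (P h (V (h + 1))).mulVec
          ((((List.range (k - (h + 1))).map (fun j => P (j + (h + 1)) (V (j + (h + 1) + 1)))).prod).mulVec (ζ k)) s
        = ∑ k ∈ Finset.Icc (h + 1) H,
          (((List.range (k - h)).map (fun j => P (j + h) (V (j + h + 1)))).prod.mulVec (ζ k)) s := by
      apply Finset.sum_congr rfl
      intro k hk
      exact prodeq k (Finset.mem_Icc.mp hk).1
    -- split Icc h H = insert h (Icc (h+1) H)
    have hsplit : Finset.Icc h H = insert h (Finset.Icc (h + 1) H) := by
      ext x
      simp only [Finset.mem_Icc, Finset.mem_insert]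
      omega
    rw [hsplit, Finset.sum_insert (by simp)]
    have hterm : (((List.range (h - h)).map (fun j => P (j + h) (V (j + h + 1)))).prod.mulVec (ζ h)) s = ζ h s := by
      simp [Nat.sub_self]
    rw [hterm]
    linarith [step, mono, sum_eq.le, sum_eq.ge]
end

section
/- Let {X_k}_{k=1}^n be a real-valued martingale difference sequence with |X_k| ≤ R almost surely, and let W_n = ∑_{k=1}^n E[X_k² | X_1,…,X_{k-1}]. Then for any κ > 0, with probability at least 1 − δ, |∑_{k=1}^n X_k| ≤ √(8 W_n log(3n/δ)) + 5R log(3n/δ) ≤ κ W_n + (2/κ + 5R) log(3n/δ). -/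
open MeasureTheory Finset

lemma exp_le_one_add_add_sq {x : ℝ} (hx : |x| ≤ 1) : Real.exp x ≤ 1 + x + x ^ 2 := by
  have h := Real.exp_bound hx (n := 2) (by norm_num)
  have h2 : ∑ i ∈ range 2, x ^ i / (Nat.factorial i) = 1 + x := by
    simp [Finset.sum_range_succ]
  rw [h2] at h
  have h3 := (abs_le.1 h).2
  norm_num at h3
  nlinarith [sq_abs x, sq_nonneg x]

lemma integrable_of_abs_le {Ω : Type*} [m0 : MeasurableSpace Ω] {μ : Measure Ω}
    [IsFiniteMeasure μ] {f : Ω → ℝ} (hf : AEStronglyMeasurable f μ) (C : ℝ)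
    (h : ∀ᵐ ω ∂μ, |f ω| ≤ C) : Integrable f μ :=
  (integrable_const C).mono' hf (by filter_upwards [h] with ω hω; simpa [Real.norm_eq_abs] using hω)

lemma freedman_mgf {Ω : Type*} [m0 : MeasurableSpace Ω] (μ : Measure Ω) [IsProbabilityMeasure μ]
    (ℱ : Filtration ℕ m0) (X : ℕ → Ω → ℝ) (R : ℝ) (hR : 0 < R)
    (hadapted : ∀ k, StronglyMeasurable[ℱ k] (X k))
    (hmds : ∀ k, 1 ≤ k → μ[X k | ℱ (k - 1)] =ᵐ[μ] 0)
    (hbdd : ∀ k, ∀ᵐ ω ∂μ, |X k ω| ≤ R)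
    (lam : ℝ) (hlam0 : 0 ≤ lam) (hlamR : lam * R ≤ 1) :
    ∀ m : ℕ, ∫ ω, Real.exp (lam * (∑ k ∈ Icc 1 m, X k ω)
      - lam ^ 2 * (∑ k ∈ Icc 1 m, (μ[(X k) ^ 2 | ℱ (k - 1)]) ω)) ∂μ ≤ 1 := by
  have hXsm : ∀ k, StronglyMeasurable (X k) := fun k => (hadapted k).mono (ℱ.le k)
  have hXint : ∀ k, Integrable (X k) μ :=
    fun k => integrable_of_abs_le (hXsm k).aestronglyMeasurable R (hbdd k)
  have hX2bdd : ∀ k, ∀ᵐ ω ∂μ, |(X k ω) ^ 2| ≤ R ^ 2 := by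
    intro k; filter_upwards [hbdd k] with ω hω
    rw [abs_of_nonneg (sq_nonneg _)]
    nlinarith [abs_nonneg (X k ω), neg_abs_le (X k ω), le_abs_self (X k ω)]
  have hX2int : ∀ k, Integrable ((X k) ^ 2) μ := by
    intro k
    exact integrable_of_abs_le ((hXsm k).pow 2).aestronglyMeasurable (R ^ 2) (hX2bdd k)
  -- conditional variances
  have hVnonneg : ∀ k, 0 ≤ᵐ[μ] μ[(X k) ^ 2 | ℱ (k - 1)] :=
    fun k => condExp_nonneg (Filter.Eventually.of_forall fun ω => sq_nonneg _)
  have hVle : ∀ k, ∀ᵐ ω ∂μ, (μ[(X k) ^ 2 | ℱ (k - 1)]) ω ≤ R ^ 2 := by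
    intro k
    have h1 : (X k) ^ 2 ≤ᵐ[μ] fun _ => R ^ 2 := by
      filter_upwards [hX2bdd k] with ω hω
      simpa using (abs_le.1 hω).2
    have h2 := condExp_mono (m := ℱ (k - 1)) (hX2int k) (integrable_const _) h1
    filter_upwards [h2, condExp_const (ℱ.le (k - 1)) (R ^ 2) (μ := μ) ▸ h2] with ω hω _
    calc (μ[(X k) ^ 2 | ℱ (k - 1)]) ω ≤ (μ[(fun _ => R ^ 2 : Ω → ℝ) | ℱ (k - 1)]) ω := hω
    _ = R ^ 2 := by rw [condExp_const (ℱ.le (k - 1))]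
  intro m
  induction m with
  | zero => simp
  | succ m ih =>
    -- abbreviations
    set S : Ω → ℝ := fun ω => ∑ k ∈ Icc 1 m, X k ω with hS
    set W : Ω → ℝ := fun ω => ∑ k ∈ Icc 1 m, (μ[(X k) ^ 2 | ℱ (k - 1)]) ω with hW
    set V : Ω → ℝ := μ[(X (m + 1)) ^ 2 | ℱ m] with hV
    set G : Ω → ℝ := fun ω => Real.exp (lam * X (m + 1) ω) with hG
    set F : Ω → ℝ := fun ω => Real.exp (lam * S ω - lam ^ 2 * (W ω + V ω)) with hF
    have hgoal : (fun ω => Real.exp (lam * (∑ k ∈ Icc 1 (m+1), X k ω)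
        - lam ^ 2 * (∑ k ∈ Icc 1 (m+1), (μ[(X k) ^ 2 | ℱ (k - 1)]) ω)))
        = fun ω => F ω * G ω := by
      funext ω
      rw [Finset.sum_Icc_succ_top (Nat.le_add_left 1 m) (fun k => X k ω),
        Finset.sum_Icc_succ_top (Nat.le_add_left 1 m)
          (fun k => (μ[(X k) ^ 2 | ℱ (k - 1)]) ω)]
      show Real.exp (lam * (S ω + X (m + 1) ω) - lam ^ 2 * (W ω + V ω)) = F ω * G ω
      rw [show lam * (S ω + X (m + 1) ω) - lam ^ 2 * (W ω + V ω)
          = (lam * S ω - lam ^ 2 * (W ω + V ω)) + lam * X (m + 1) ω from by ring,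
        Real.exp_add]
    rw [hgoal]
    -- measurability
    have hSmeas : StronglyMeasurable[ℱ m] S := by
      apply Finset.stronglyMeasurable_fun_sum
      intro k hk
      exact (hadapted k).mono (ℱ.mono (mem_Icc.1 hk).2)
    have hWmeas : StronglyMeasurable[ℱ m] W := by
      apply Finset.stronglyMeasurable_fun_sum
      intro k hk
      exact stronglyMeasurable_condExp.mono (ℱ.mono (Nat.le_trans (Nat.sub_le k 1) (mem_Icc.1 hk).2))
    have hVmeas : StronglyMeasurable[ℱ m] V := stronglyMeasurable_condExp
    have hFmeas : StronglyMeasurable[ℱ m] F :=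
      Real.continuous_exp.comp_stronglyMeasurable
        ((hSmeas.const_mul lam).sub ((hWmeas.add hVmeas).const_mul (lam ^ 2)))
    -- a.e. bounds
    have hSbdd : ∀ᵐ ω ∂μ, |S ω| ≤ m * R := by
      have hb : ∀ᵐ ω ∂μ, ∀ k ∈ Icc 1 m, |X k ω| ≤ R :=
        (ae_ball_iff (Icc 1 m).countable_toSet).2 fun k _ => hbdd k
      filter_upwards [hb] with ω hω
      calc |S ω| ≤ ∑ k ∈ Icc 1 m, |X k ω| := Finset.abs_sum_le_sum_abs _ _
      _ ≤ ∑ _k ∈ Icc 1 m, R := Finset.sum_le_sum hω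
      _ = m * R := by simp [Nat.card_Icc]
    have hWnonneg : ∀ᵐ ω ∂μ, 0 ≤ W ω := by
      have hb : ∀ᵐ ω ∂μ, ∀ k ∈ Icc 1 m, 0 ≤ (μ[(X k) ^ 2 | ℱ (k - 1)]) ω :=
        (ae_ball_iff (Icc 1 m).countable_toSet).2 fun k _ => hVnonneg k
      filter_upwards [hb] with ω hω
      exact Finset.sum_nonneg hω
    have hVnn : ∀ᵐ ω ∂μ, 0 ≤ V ω := by
      have := hVnonneg (m + 1)
      simp only [Nat.add_sub_cancel] at this; exact this
    have hFbdd : ∀ᵐ ω ∂μ, ‖F ω‖ ≤ Real.exp (lam * (m * R)) := by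
      filter_upwards [hSbdd, hWnonneg, hVnn] with ω h1 h2 h3
      rw [Real.norm_eq_abs, abs_of_pos (Real.exp_pos _), Real.exp_le_exp]
      have : lam * S ω ≤ lam * (m * R) :=
        mul_le_mul_of_nonneg_left ((le_abs_self _).trans h1) hlam0
      nlinarith [sq_nonneg lam]
    have hGbdd : ∀ᵐ ω ∂μ, |G ω| ≤ Real.exp (lam * R) := by
      filter_upwards [hbdd (m + 1)] with ω hω
      rw [abs_of_pos (Real.exp_pos _), Real.exp_le_exp]
      exact mul_le_mul_of_nonneg_left ((le_abs_self _).trans hω) hlam0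
    have hGmeas : StronglyMeasurable G :=
      Real.continuous_exp.comp_stronglyMeasurable ((hXsm (m + 1)).const_mul lam)
    have hGint : Integrable G μ :=
      integrable_of_abs_le hGmeas.aestronglyMeasurable _ hGbdd
    have hFGint : Integrable (F * G) μ := by
      refine integrable_of_abs_le (((hFmeas.mono (ℱ.le m)).mul hGmeas).aestronglyMeasurable)
        (Real.exp (lam * (m * R)) * Real.exp (lam * R)) ?_
      filter_upwards [hFbdd, hGbdd] with ω h1 h2
      rw [Pi.mul_apply, abs_mul]
      exact mul_le_mul (by simpa [Real.norm_eq_abs] using h1) h2 (abs_nonneg _)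
        (Real.exp_pos _).le
    -- conditional expectation bound for G
    have hcond_le : μ[G | ℱ m] ≤ᵐ[μ] fun ω => Real.exp (lam ^ 2 * V ω) := by
      set H : Ω → ℝ := fun ω => 1 + (lam * X (m + 1) ω + lam ^ 2 * (X (m + 1) ω) ^ 2) with hH
      have hGH : G ≤ᵐ[μ] H := by
        filter_upwards [hbdd (m + 1)] with ω hω
        have habs : |lam * X (m + 1) ω| ≤ 1 := by
          rw [abs_mul, abs_of_nonneg hlam0]
          calc lam * |X (m + 1) ω| ≤ lam * R := mul_le_mul_of_nonneg_left hω hlam0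
          _ ≤ 1 := hlamR
        have := exp_le_one_add_add_sq habs
        simp only [hG, hH]
        nlinarith [this]
      have hHint : Integrable H μ :=
        (integrable_const (1 : ℝ)).add (((hXint (m + 1)).const_mul lam).add
          ((hX2int (m + 1)).const_mul (lam ^ 2)))
      have h1 : μ[G | ℱ m] ≤ᵐ[μ] μ[H | ℱ m] := condExp_mono hGint hHint hGH
      have hHeq : μ[H | ℱ m] =ᵐ[μ] fun ω => 1 + lam ^ 2 * V ω := by
        have e1 : μ[H | ℱ m] =ᵐ[μ]
            μ[(fun _ => (1 : ℝ)) | ℱ m] + μ[(fun ω => lam * X (m + 1) ω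
              + lam ^ 2 * (X (m + 1) ω) ^ 2) | ℱ m] :=
          condExp_add (integrable_const _) (((hXint (m + 1)).const_mul lam).add
            ((hX2int (m + 1)).const_mul (lam ^ 2))) (ℱ m)
        have e2 : μ[(fun ω => lam * X (m + 1) ω + lam ^ 2 * (X (m + 1) ω) ^ 2) | ℱ m] =ᵐ[μ]
            μ[(fun ω => lam * X (m + 1) ω) | ℱ m]
              + μ[(fun ω => lam ^ 2 * (X (m + 1) ω) ^ 2) | ℱ m] :=
          condExp_add ((hXint (m + 1)).const_mul lam) ((hX2int (m + 1)).const_mul (lam ^ 2)) (ℱ m)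
        have e3 : μ[(fun ω => lam * X (m + 1) ω) | ℱ m] =ᵐ[μ] fun _ => 0 := by
          have hsmul : μ[(fun ω => lam * X (m + 1) ω) | ℱ m] =ᵐ[μ] lam • μ[X (m + 1) | ℱ m] := by
            have := condExp_smul (m := ℱ m) (m₀ := m0) (μ := μ) lam (X (m + 1))
            exact this
          have hzero : μ[X (m + 1) | ℱ m] =ᵐ[μ] 0 := by
            have := hmds (m + 1) (Nat.le_add_left 1 m)
            simpa [Nat.add_sub_cancel] using this
          filter_upwards [hsmul, hzero] with ω h h'
          simp [h, h']
        have e4 : μ[(fun ω => lam ^ 2 * (X (m + 1) ω) ^ 2) | ℱ m] =ᵐ[μ]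
            fun ω => lam ^ 2 * V ω := by
          have hfeq : (fun ω => lam ^ 2 * (X (m + 1) ω) ^ 2) = lam ^ 2 • ((X (m + 1)) ^ 2) := by
            funext x; simp [smul_eq_mul]
          rw [hfeq]
          filter_upwards [condExp_smul (m := ℱ m) (m₀ := m0) (μ := μ) (lam ^ 2)
            ((X (m + 1)) ^ 2)] with ω h
          rw [h]
          simp [smul_eq_mul, hV]
        have e5 : μ[(fun _ => (1 : ℝ)) | ℱ m] = fun _ => (1 : ℝ) := condExp_const (ℱ.le m) 1
        filter_upwards [e1, e2, e3, e4] with ω h1' h2' h3' h4'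
        simp only [Pi.add_apply] at h1' h2' ⊢
        rw [h1', h2', h3', h4', e5]
        simp
      filter_upwards [h1, hHeq] with ω h h'
      calc (μ[G | ℱ m]) ω ≤ (μ[H | ℱ m]) ω := h
      _ = 1 + lam ^ 2 * V ω := h'
      _ ≤ Real.exp (lam ^ 2 * V ω) := by
        have := Real.add_one_le_exp (lam ^ 2 * V ω); linarith
    -- pull-out
    have hpull : μ[F * G | ℱ m] =ᵐ[μ] F * μ[G | ℱ m] :=
      condExp_stronglyMeasurable_mul_of_bound (ℱ.le m) hFmeas hGint _ hFbdd
    have hEint : Integrable (fun ω => Real.exp (lam * S ω - lam ^ 2 * W ω)) μ := by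
      refine integrable_of_abs_le ((Real.continuous_exp.comp_stronglyMeasurable
        (((hSmeas.const_mul lam).sub (hWmeas.const_mul (lam ^ 2))).mono
          (ℱ.le m))).aestronglyMeasurable) (Real.exp (lam * (m * R))) ?_
      filter_upwards [hSbdd, hWnonneg] with ω h1 h2
      rw [abs_of_pos (Real.exp_pos _), Real.exp_le_exp]
      have : lam * S ω ≤ lam * (m * R) :=
        mul_le_mul_of_nonneg_left ((le_abs_self _).trans h1) hlam0
      nlinarith [sq_nonneg lam]
    calc ∫ ω, F ω * G ω ∂μ = ∫ ω, (μ[F * G | ℱ m]) ω ∂μ :=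
          (integral_condExp (ℱ.le m) (f := F * G)).symm
    _ ≤ ∫ ω, Real.exp (lam * S ω - lam ^ 2 * W ω) ∂μ := by
        refine integral_mono_ae integrable_condExp hEint ?_
        filter_upwards [hpull, hcond_le] with ω h1 h2
        rw [h1, Pi.mul_apply]
        have hF0 : 0 < F ω := Real.exp_pos _
        calc F ω * (μ[G | ℱ m]) ω ≤ F ω * Real.exp (lam ^ 2 * V ω) :=
              mul_le_mul_of_nonneg_left h2 hF0.le
        _ = Real.exp (lam * S ω - lam ^ 2 * W ω) := by
            rw [hF, ← Real.exp_add]; congr 1; ring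
    _ ≤ 1 := ih

lemma freedman_tail {Ω : Type*} [m0 : MeasurableSpace Ω] (μ : Measure Ω) [IsProbabilityMeasure μ]
    (ℱ : Filtration ℕ m0) (X : ℕ → Ω → ℝ) (R : ℝ) (hR : 0 < R)
    (hadapted : ∀ k, StronglyMeasurable[ℱ k] (X k))
    (hmds : ∀ k, 1 ≤ k → μ[X k | ℱ (k - 1)] =ᵐ[μ] 0)
    (hbdd : ∀ k, ∀ᵐ ω ∂μ, |X k ω| ≤ R)
    (lam a b : ℝ) (hlam0 : 0 ≤ lam) (hlamR : lam * R ≤ 1) (n : ℕ) :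
    μ {ω | a ≤ ∑ k ∈ Icc 1 n, X k ω
        ∧ (∑ k ∈ Icc 1 n, (μ[(X k) ^ 2 | ℱ (k - 1)]) ω) ≤ b}
      ≤ ENNReal.ofReal (Real.exp (lam ^ 2 * b - lam * a)) := by
  set S : Ω → ℝ := fun ω => ∑ k ∈ Icc 1 n, X k ω with hS
  set W : Ω → ℝ := fun ω => ∑ k ∈ Icc 1 n, (μ[(X k) ^ 2 | ℱ (k - 1)]) ω with hW
  set f : Ω → ℝ := fun ω => Real.exp (lam * S ω - lam ^ 2 * W ω) with hf
  have hXsm : ∀ k, StronglyMeasurable (X k) := fun k => (hadapted k).mono (ℱ.le k)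
  have hfmeas : StronglyMeasurable f := by
    refine Real.continuous_exp.comp_stronglyMeasurable ?_
    refine StronglyMeasurable.sub (StronglyMeasurable.const_mul ?_ lam)
      (StronglyMeasurable.const_mul ?_ (lam ^ 2))
    · exact Finset.stronglyMeasurable_fun_sum _ fun k _ => hXsm k
    · exact Finset.stronglyMeasurable_fun_sum _ fun k _ =>
        stronglyMeasurable_condExp.mono (ℱ.le (k - 1))
  have hfnonneg : 0 ≤ᵐ[μ] f := Filter.Eventually.of_forall fun ω => (Real.exp_pos _).le
  -- integrability of f
  have hVnonneg : ∀ k, 0 ≤ᵐ[μ] μ[(X k) ^ 2 | ℱ (k - 1)] :=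
    fun k => condExp_nonneg (Filter.Eventually.of_forall fun ω => sq_nonneg _)
  have hWnonneg : ∀ᵐ ω ∂μ, 0 ≤ W ω := by
    have hb : ∀ᵐ ω ∂μ, ∀ k ∈ Icc 1 n, 0 ≤ (μ[(X k) ^ 2 | ℱ (k - 1)]) ω :=
      (ae_ball_iff (Icc 1 n).countable_toSet).2 fun k _ => hVnonneg k
    filter_upwards [hb] with ω hω
    exact Finset.sum_nonneg hω
  have hSbdd : ∀ᵐ ω ∂μ, |S ω| ≤ n * R := by
    have hb : ∀ᵐ ω ∂μ, ∀ k ∈ Icc 1 n, |X k ω| ≤ R :=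
      (ae_ball_iff (Icc 1 n).countable_toSet).2 fun k _ => hbdd k
    filter_upwards [hb] with ω hω
    calc |S ω| ≤ ∑ k ∈ Icc 1 n, |X k ω| := Finset.abs_sum_le_sum_abs _ _
    _ ≤ ∑ _k ∈ Icc 1 n, R := Finset.sum_le_sum hω
    _ = n * R := by simp [Nat.card_Icc]
  have hfint : Integrable f μ := by
    refine integrable_of_abs_le hfmeas.aestronglyMeasurable (Real.exp (lam * (n * R))) ?_
    filter_upwards [hSbdd, hWnonneg] with ω h1 h2
    rw [abs_of_pos (Real.exp_pos _), Real.exp_le_exp]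
    have : lam * S ω ≤ lam * (n * R) :=
      mul_le_mul_of_nonneg_left ((le_abs_self _).trans h1) hlam0
    nlinarith [sq_nonneg lam]
  have hfI : ∫ ω, f ω ∂μ ≤ 1 := freedman_mgf μ ℱ X R hR hadapted hmds hbdd lam hlam0 hlamR n
  set ε : ℝ := Real.exp (lam * a - lam ^ 2 * b) with hε
  have hsub : {ω | a ≤ S ω ∧ W ω ≤ b} ⊆ {ω | ε ≤ f ω} := by
    intro ω hω
    have h1 : lam * a ≤ lam * S ω := mul_le_mul_of_nonneg_left hω.1 hlam0
    have h2 : lam ^ 2 * W ω ≤ lam ^ 2 * b := mul_le_mul_of_nonneg_left hω.2 (sq_nonneg _)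
    exact Real.exp_le_exp.2 (by linarith)
  have hmarkov := mul_meas_ge_le_integral_of_nonneg hfnonneg hfint ε
  have hmono := measure_mono (μ := μ) hsub
  have hfin : μ {ω | ε ≤ f ω} ≠ ⊤ := measure_ne_top μ _
  have htoReal : (μ {ω | ε ≤ f ω}).toReal ≤ Real.exp (lam ^ 2 * b - lam * a) := by
    have hεpos : 0 < ε := Real.exp_pos _
    have h1 : (μ {ω | ε ≤ f ω}).toReal ≤ 1 / ε := by
      rw [le_div_iff₀ hεpos, mul_comm]
      exact hmarkov.trans hfI
    have h2 : 1 / ε = Real.exp (lam ^ 2 * b - lam * a) := by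
      rw [hε, one_div, ← Real.exp_neg]
      congr 1; ring
    linarith [h1, h2.le]
  calc μ {ω | a ≤ S ω ∧ W ω ≤ b} ≤ μ {ω | ε ≤ f ω} := hmono
  _ = ENNReal.ofReal ((μ {ω | ε ≤ f ω}).toReal) := (ENNReal.ofReal_toReal hfin).symm
  _ ≤ ENNReal.ofReal (Real.exp (lam ^ 2 * b - lam * a)) := ENNReal.ofReal_le_ofReal htoReal

lemma freedman_onesided {Ω : Type*} [m0 : MeasurableSpace Ω] (μ : Measure Ω)
    [IsProbabilityMeasure μ]
    (ℱ : Filtration ℕ m0) (X : ℕ → Ω → ℝ) (R : ℝ) (hR : 0 < R)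
    (hadapted : ∀ k, StronglyMeasurable[ℱ k] (X k))
    (hmds : ∀ k, 1 ≤ k → μ[X k | ℱ (k - 1)] =ᵐ[μ] 0)
    (hbdd : ∀ k, ∀ᵐ ω ∂μ, |X k ω| ≤ R)
    (a b L : ℝ) (hb : 0 < b) (hL : 1 ≤ L)
    (ha1 : 2 * Real.sqrt (b * L) ≤ a) (ha2 : 5 * R * L ≤ a) (n : ℕ) :
    μ {ω | a ≤ ∑ k ∈ Icc 1 n, X k ω
        ∧ (∑ k ∈ Icc 1 n, (μ[(X k) ^ 2 | ℱ (k - 1)]) ω) ≤ b}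
      ≤ ENNReal.ofReal (Real.exp (-L)) := by
  have ha0 : 0 ≤ a := le_trans (by positivity) ha2
  have hsq : (2 * Real.sqrt (b * L)) ^ 2 = 4 * (b * L) := by
    rw [mul_pow, Real.sq_sqrt (by positivity)]; ring
  have ha2' : 4 * (b * L) ≤ a ^ 2 := by
    calc 4 * (b * L) = (2 * Real.sqrt (b * L)) ^ 2 := hsq.symm
    _ ≤ a ^ 2 := by nlinarith [Real.sqrt_nonneg (b * L)]
  by_cases hcase : a * R ≤ 2 * b
  · -- lam = a / (2b)
    have hlam0 : 0 ≤ a / (2 * b) := by positivity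
    have hlamR : a / (2 * b) * R ≤ 1 := by
      rw [div_mul_eq_mul_div, div_le_one (by positivity)]
      linarith
    refine (freedman_tail μ ℱ X R hR hadapted hmds hbdd (a / (2 * b)) a b hlam0 hlamR n).trans ?_
    apply ENNReal.ofReal_le_ofReal
    rw [Real.exp_le_exp]
    have hkey : (a / (2 * b)) ^ 2 * b - a / (2 * b) * a = -(a ^ 2 / (4 * b)) := by
      field_simp; ring
    rw [hkey]
    have : L ≤ a ^ 2 / (4 * b) := by
      rw [le_div_iff₀ (by positivity)]
      nlinarith
    linarith
  · -- lam = 1 / R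
    push_neg at hcase
    have hlam0 : 0 ≤ 1 / R := by positivity
    have hlamR : 1 / R * R ≤ 1 := by
      rw [one_div, inv_mul_cancel₀ hR.ne']
    refine (freedman_tail μ ℱ X R hR hadapted hmds hbdd (1 / R) a b hlam0 hlamR n).trans ?_
    apply ENNReal.ofReal_le_ofReal
    rw [Real.exp_le_exp]
    have h1 : (1 / R) ^ 2 * b - 1 / R * a = b / R ^ 2 - a / R := by ring
    rw [h1]
    have h2 : b / R ^ 2 < a / (2 * R) := by
      rw [div_lt_div_iff₀ (by positivity) (by positivity)]
      nlinarith
    have h3 : L ≤ a / (2 * R) := by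
      rw [le_div_iff₀ (by positivity)]
      nlinarith
    have h4 : a / (2 * R) + a / (2 * R) = a / R := by field_simp; ring
    linarith

lemma freedman_assemble {Ω : Type*} [m0 : MeasurableSpace Ω] (μ : Measure Ω)
    [IsProbabilityMeasure μ] (S W : Ω → ℝ) (R L κ δ : ℝ) (n : ℕ) (hn : 1 ≤ n)
    (hR : 0 < R) (hκ : 0 < κ) (hδ0 : 0 < δ) (hδ1 : δ < 1) (hL1 : 1 ≤ L)
    (hexpL : Real.exp (-L) = δ / (3 * n))
    (hWgood : ∀ᵐ ω ∂μ, 0 ≤ W ω ∧ W ω ≤ n * R ^ 2)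
    (hS1 : n = 1 → ∀ᵐ ω ∂μ, |S ω| ≤ R)
    (htailp : ∀ a b : ℝ, 0 < b → 2 * Real.sqrt (b * L) ≤ a → 5 * R * L ≤ a →
      μ {ω | a ≤ S ω ∧ W ω ≤ b} ≤ ENNReal.ofReal (Real.exp (-L)))
    (htailm : ∀ a b : ℝ, 0 < b → 2 * Real.sqrt (b * L) ≤ a → 5 * R * L ≤ a →
      μ {ω | a ≤ -S ω ∧ W ω ≤ b} ≤ ENNReal.ofReal (Real.exp (-L))) :
    ENNReal.ofReal (1 - δ) ≤
      μ {ω : Ω | |S ω| ≤ Real.sqrt (8 * W ω * L) + 5 * R * L ∧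
        |S ω| ≤ κ * W ω + (2 / κ + 5 * R) * L} := by
  have hn1 : (1 : ℝ) ≤ (n : ℝ) := by exact_mod_cast hn
  have h3n : (0 : ℝ) < 3 * n := by positivity
  have hLpos : (0 : ℝ) < L := lt_of_lt_of_le one_pos hL1
  set E : Set Ω := {ω : Ω | |S ω| ≤ Real.sqrt (8 * W ω * L) + 5 * R * L ∧
      |S ω| ≤ κ * W ω + (2 / κ + 5 * R) * L} with hEdef
  -- AM-GM step
  have hamgm : ∀ ω, 0 ≤ W ω → Real.sqrt (8 * W ω * L) ≤ κ * W ω + 2 / κ * L := by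
    intro ω hW0
    set s : ℝ := Real.sqrt (8 * W ω * L) with hs
    have hs0 : 0 ≤ s := Real.sqrt_nonneg _
    have hs2 : s ^ 2 = 8 * W ω * L := Real.sq_sqrt (by positivity)
    have hks2 : (κ * s) ^ 2 = 8 * κ ^ 2 * W ω * L := by rw [mul_pow, hs2]; ring
    have key : κ * s ≤ κ ^ 2 * W ω + 2 * L := by
      nlinarith [sq_nonneg (κ ^ 2 * W ω - 2 * L), hks2, mul_nonneg hκ.le hs0,
        mul_nonneg (mul_nonneg hκ.le hκ.le) hW0, hLpos.le]
    calc s = κ * s / κ := by field_simp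
    _ ≤ (κ ^ 2 * W ω + 2 * L) / κ := by gcongr
    _ = κ * W ω + 2 / κ * L := by field_simp
  -- thresholds
  set a : ℕ → ℝ := fun j => if j = 0 then 5 * R * L
      else 2 * Real.sqrt ((2 : ℝ) ^ j * R ^ 2 * L) + 5 * R * L with hadef
  have hsqrt4 : Real.sqrt 4 = 2 := by
    rw [show (4 : ℝ) = 2 ^ 2 by norm_num, Real.sqrt_sq (by norm_num : (0:ℝ) ≤ 2)]
  -- covering argument
  have hcover : ∀ ω, 0 ≤ W ω → W ω ≤ n * R ^ 2 →
      ¬(|S ω| ≤ Real.sqrt (8 * W ω * L) + 5 * R * L) →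
      ∃ j, j ≤ n ∧ (a j ≤ S ω ∨ a j ≤ -S ω) ∧ W ω ≤ (2 : ℝ) ^ j * R ^ 2 := by
    intro ω h0 h1 h2
    push_neg at h2
    have habs : ∀ t : ℝ, t ≤ |S ω| → (t ≤ S ω ∨ t ≤ -S ω) := by
      intro t ht
      rcases abs_cases (S ω) with ⟨he, _⟩ | ⟨he, _⟩
      · left; rwa [he] at ht
      · right; rwa [he] at ht
    have hWn : W ω ≤ (2 : ℝ) ^ n * R ^ 2 := by
      refine h1.trans ?_
      have h2n : (n : ℝ) ≤ 2 ^ n := by exact_mod_cast (Nat.lt_two_pow_self (n := n)).le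
      nlinarith [sq_nonneg R]
    by_cases hW0 : W ω ≤ R ^ 2
    · refine ⟨0, Nat.zero_le n, habs _ ?_, by simpa using hW0⟩
      have hs := Real.sqrt_nonneg (8 * W ω * L)
      simp only [hadef, if_pos rfl]
      linarith [h2.le]
    · have hex : ∃ j, W ω ≤ (2 : ℝ) ^ j * R ^ 2 := ⟨n, hWn⟩
      have hj : W ω ≤ (2 : ℝ) ^ (Nat.find hex) * R ^ 2 := Nat.find_spec hex
      have hjn : Nat.find hex ≤ n := Nat.find_min' hex hWn
      have hj0 : Nat.find hex ≠ 0 := by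
        intro h
        apply hW0
        have h' := hj
        rw [h] at h'
        simpa using h'
      have hjpred := Nat.find_min hex (Nat.sub_lt (Nat.pos_of_ne_zero hj0) one_pos)
      push_neg at hjpred
      refine ⟨Nat.find hex, hjn, habs _ ?_, hj⟩
      simp only [hadef, if_neg hj0]
      have hpow : (2 : ℝ) ^ (Nat.find hex) = 2 * 2 ^ (Nat.find hex - 1) := by
        conv_lhs => rw [show Nat.find hex = (Nat.find hex - 1) + 1 from
          (Nat.succ_pred_eq_of_pos (Nat.pos_of_ne_zero hj0)).symm]
        rw [pow_succ]; ring
      have hkey : 2 * Real.sqrt ((2 : ℝ) ^ (Nat.find hex) * R ^ 2 * L)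
          ≤ Real.sqrt (8 * W ω * L) := by
        have h4 : 2 * Real.sqrt ((2 : ℝ) ^ (Nat.find hex) * R ^ 2 * L)
            = Real.sqrt (4 * ((2 : ℝ) ^ (Nat.find hex) * R ^ 2 * L)) := by
          rw [Real.sqrt_mul (by norm_num : (0:ℝ) ≤ 4), hsqrt4]
        rw [h4]
        apply Real.sqrt_le_sqrt
        rw [hpow]
        nlinarith [hjpred, hLpos]
      linarith [h2.le]
  -- properties of the thresholds
  have hsqL : Real.sqrt L ≤ L := by
    nlinarith [Real.sq_sqrt hLpos.le, Real.sqrt_nonneg L, sq_nonneg (Real.sqrt L - 1)]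
  have ha1 : ∀ j : ℕ, 2 * Real.sqrt ((2 : ℝ) ^ j * R ^ 2 * L) ≤ a j := by
    intro j
    rcases Nat.eq_zero_or_pos j with h | h
    · subst h
      simp only [hadef, if_pos rfl, pow_zero, one_mul]
      have he : Real.sqrt (R ^ 2 * L) = R * Real.sqrt L := by
        rw [Real.sqrt_mul (sq_nonneg R), Real.sqrt_sq hR.le]
      rw [he]
      nlinarith [Real.sqrt_nonneg L]
    · simp only [hadef, if_neg (Nat.pos_iff_ne_zero.mp h)]
      nlinarith [hR, hLpos]
  have ha2 : ∀ j : ℕ, 5 * R * L ≤ a j := by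
    intro j
    rcases Nat.eq_zero_or_pos j with h | h
    · subst h; simp [hadef]
    · simp only [hadef, if_neg (Nat.pos_iff_ne_zero.mp h)]
      nlinarith [Real.sqrt_nonneg ((2 : ℝ) ^ j * R ^ 2 * L)]
  have hb1 : ∀ j : ℕ, 2 * Real.sqrt ((2 : ℝ) ^ j * R ^ 2 * L)
      = 2 * Real.sqrt (((2 : ℝ) ^ j * R ^ 2) * L) := fun j => rfl
  -- the bad-set bound
  have hEcbound : μ Eᶜ ≤ ENNReal.ofReal δ := by
    rcases eq_or_lt_of_le hn with hn1' | hn2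
    · -- n = 1 : the event holds almost surely
      have hae : ∀ᵐ ω ∂μ, ω ∈ E := by
        filter_upwards [hS1 hn1'.symm, hWgood] with ω h1 h2
        have h5 : R ≤ 5 * R * L := by nlinarith
        have hsq := Real.sqrt_nonneg (8 * W ω * L)
        have hκW : 0 ≤ κ * W ω := mul_nonneg hκ.le h2.1
        have hκL : 0 ≤ 2 / κ * L := by positivity
        have heq : κ * W ω + (2 / κ + 5 * R) * L
            = κ * W ω + 2 / κ * L + 5 * R * L := by ring
        refine ⟨by linarith, ?_⟩
        show |S ω| ≤ κ * W ω + (2 / κ + 5 * R) * L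
        rw [heq]
        linarith
      have hE0 : μ Eᶜ = 0 := by
        have h := ae_iff.mp hae
        simpa [Set.compl_def] using h
      rw [hE0]
      exact zero_le
    · -- n ≥ 2
      have hEc : Eᶜ ⊆ {ω | ¬(0 ≤ W ω ∧ W ω ≤ n * R ^ 2)}
          ∪ ⋃ j ∈ range (n + 1), ({ω | a j ≤ S ω ∧ W ω ≤ (2 : ℝ) ^ j * R ^ 2}
            ∪ {ω | a j ≤ -S ω ∧ W ω ≤ (2 : ℝ) ^ j * R ^ 2}) := by
        intro ω hω
        by_cases hg : 0 ≤ W ω ∧ W ω ≤ n * R ^ 2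
        · right
          have hnot1 : ¬(|S ω| ≤ Real.sqrt (8 * W ω * L) + 5 * R * L) := by
            intro h1
            apply hω
            refine ⟨h1, ?_⟩
            have ham := hamgm ω hg.1
            have heq : κ * W ω + (2 / κ + 5 * R) * L
                = κ * W ω + 2 / κ * L + 5 * R * L := by ring
            show |S ω| ≤ κ * W ω + (2 / κ + 5 * R) * L
            rw [heq]
            linarith
          obtain ⟨j, hjn, hdisj, hWj⟩ := hcover ω hg.1 hg.2 hnot1
          refine Set.mem_biUnion (mem_range.2 (Nat.lt_succ_of_le hjn)) ?_
          rcases hdisj with h | h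
          · exact Or.inl ⟨h, hWj⟩
          · exact Or.inr ⟨h, hWj⟩
        · left; exact hg
      have hNnull : μ {ω | ¬(0 ≤ W ω ∧ W ω ≤ n * R ^ 2)} = 0 := ae_iff.mp hWgood
      have htailp' : ∀ j : ℕ, μ {ω | a j ≤ S ω ∧ W ω ≤ (2 : ℝ) ^ j * R ^ 2}
          ≤ ENNReal.ofReal (δ / (3 * n)) := by
        intro j
        rw [← hexpL]
        exact htailp (a j) ((2 : ℝ) ^ j * R ^ 2) (by positivity)
          (by rw [← hb1 j]; exact ha1 j) (ha2 j)
      have htailm' : ∀ j : ℕ, μ {ω | a j ≤ -S ω ∧ W ω ≤ (2 : ℝ) ^ j * R ^ 2}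
          ≤ ENNReal.ofReal (δ / (3 * n)) := by
        intro j
        rw [← hexpL]
        exact htailm (a j) ((2 : ℝ) ^ j * R ^ 2) (by positivity)
          (by rw [← hb1 j]; exact ha1 j) (ha2 j)
      calc μ Eᶜ ≤ μ ({ω | ¬(0 ≤ W ω ∧ W ω ≤ n * R ^ 2)}
            ∪ ⋃ j ∈ range (n + 1), ({ω | a j ≤ S ω ∧ W ω ≤ (2 : ℝ) ^ j * R ^ 2}
              ∪ {ω | a j ≤ -S ω ∧ W ω ≤ (2 : ℝ) ^ j * R ^ 2})) := measure_mono hEc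
      _ ≤ μ {ω | ¬(0 ≤ W ω ∧ W ω ≤ n * R ^ 2)}
            + μ (⋃ j ∈ range (n + 1), ({ω | a j ≤ S ω ∧ W ω ≤ (2 : ℝ) ^ j * R ^ 2}
              ∪ {ω | a j ≤ -S ω ∧ W ω ≤ (2 : ℝ) ^ j * R ^ 2})) := measure_union_le _ _
      _ ≤ 0 + ∑ j ∈ range (n + 1), μ ({ω | a j ≤ S ω ∧ W ω ≤ (2 : ℝ) ^ j * R ^ 2}
              ∪ {ω | a j ≤ -S ω ∧ W ω ≤ (2 : ℝ) ^ j * R ^ 2}) := by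
          rw [hNnull]
          exact add_le_add le_rfl (measure_biUnion_finset_le _ _)
      _ ≤ ∑ _j ∈ range (n + 1),
            (ENNReal.ofReal (δ / (3 * n)) + ENNReal.ofReal (δ / (3 * n))) := by
          rw [zero_add]
          exact Finset.sum_le_sum fun j _ =>
            (measure_union_le _ _).trans (add_le_add (htailp' j) (htailm' j))
      _ = (n + 1) • ENNReal.ofReal (δ / (3 * n) + δ / (3 * n)) := by
          rw [Finset.sum_const, card_range, ENNReal.ofReal_add (by positivity) (by positivity)]
      _ = ENNReal.ofReal (((n : ℝ) + 1) * (δ / (3 * n) + δ / (3 * n))) := by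
          rw [nsmul_eq_mul, ENNReal.ofReal_mul (by positivity)]
          congr 1
          rw [ENNReal.ofReal_add (by positivity) zero_le_one, ENNReal.ofReal_natCast,
            ENNReal.ofReal_one]
          push_cast
          ring
      _ ≤ ENNReal.ofReal δ := by
          apply ENNReal.ofReal_le_ofReal
          have hn2' : (2 : ℝ) ≤ (n : ℝ) := by exact_mod_cast hn2
          rw [← add_div, ← mul_div_assoc]
          rw [div_le_iff₀ h3n]
          nlinarith
  -- conclude
  calc ENNReal.ofReal (1 - δ) = 1 - ENNReal.ofReal δ := by
        rw [ENNReal.ofReal_sub _ hδ0.le, ENNReal.ofReal_one]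
  _ ≤ μ E := by
      rw [tsub_le_iff_right]
      calc (1 : ENNReal) = μ Set.univ := measure_univ.symm
      _ = μ (E ∪ Eᶜ) := by rw [Set.union_compl_self]
      _ ≤ μ E + μ Eᶜ := measure_union_le _ _
      _ ≤ μ E + ENNReal.ofReal δ := add_le_add le_rfl hEcbound

/-- Freedman's inequality: for a martingale difference sequence `{X_k}` with
`|X_k| ≤ R` a.s. and predictable quadratic variation
`W_n = ∑_{k=1}^n E[X_k² | ℱ_{k-1}]`, for any `κ > 0` and `δ ∈ (0,1)`, with
probability at least `1 − δ`,
`|∑_{k=1}^n X_k| ≤ √(8 W_n log(3n/δ)) + 5R log(3n/δ) ≤ κ W_n + (2/κ + 5R) log(3n/δ)`. -/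
theorem freedman_inequality
    (Ω : Type*) [m0 : MeasurableSpace Ω] (μ : Measure Ω) [IsProbabilityMeasure μ]
    (ℱ : Filtration ℕ m0) (X : ℕ → Ω → ℝ) (n : ℕ) (hn : 1 ≤ n)
    (R : ℝ) (hR : 0 < R)
    (hadapted : ∀ k, StronglyMeasurable[ℱ k] (X k))
    (hmds : ∀ k, 1 ≤ k → μ[X k | ℱ (k - 1)] =ᵐ[μ] 0)
    (hbdd : ∀ k, ∀ᵐ ω ∂μ, |X k ω| ≤ R)
    (κ δ : ℝ) (hκ : 0 < κ) (hδ0 : 0 < δ) (hδ1 : δ < 1) :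
    ENNReal.ofReal (1 - δ) ≤
      μ {ω : Ω |
        |∑ k ∈ Finset.Icc 1 n, X k ω| ≤
            Real.sqrt (8 * (∑ k ∈ Finset.Icc 1 n, (μ[(X k) ^ 2 | ℱ (k - 1)]) ω)
                * Real.log (3 * n / δ))
              + 5 * R * Real.log (3 * n / δ) ∧
        |∑ k ∈ Finset.Icc 1 n, X k ω| ≤
            κ * (∑ k ∈ Finset.Icc 1 n, (μ[(X k) ^ 2 | ℱ (k - 1)]) ω)
              + (2 / κ + 5 * R) * Real.log (3 * n / δ)} := by
  have hn1 : (1 : ℝ) ≤ (n : ℝ) := by exact_mod_cast hn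
  have h3nδ : (0 : ℝ) < 3 * n / δ := by positivity
  have hL1 : 1 ≤ Real.log (3 * n / δ) := by
    rw [Real.le_log_iff_exp_le h3nδ]
    have h1 : Real.exp 1 < 3 := lt_trans Real.exp_one_lt_d9 (by norm_num)
    have h3 : 3 * (n : ℝ) ≤ 3 * n / δ := by
      rw [le_div_iff₀ hδ0]; nlinarith
    nlinarith
  have hexpL : Real.exp (-Real.log (3 * n / δ)) = δ / (3 * n) := by
    rw [Real.exp_neg, Real.exp_log h3nδ, inv_div]
  -- integrability facts for the conditional variances
  have hXsm : ∀ k, StronglyMeasurable (X k) := fun k => (hadapted k).mono (ℱ.le k)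
  have hX2bdd : ∀ k, ∀ᵐ ω ∂μ, |(X k ω) ^ 2| ≤ R ^ 2 := by
    intro k; filter_upwards [hbdd k] with ω hω
    rw [abs_of_nonneg (sq_nonneg _)]
    nlinarith [abs_nonneg (X k ω), neg_abs_le (X k ω), le_abs_self (X k ω)]
  have hX2int : ∀ k, Integrable ((X k) ^ 2) μ := fun k =>
    integrable_of_abs_le ((hXsm k).pow 2).aestronglyMeasurable (R ^ 2) (hX2bdd k)
  have hVnonneg : ∀ k, 0 ≤ᵐ[μ] μ[(X k) ^ 2 | ℱ (k - 1)] :=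
    fun k => condExp_nonneg (Filter.Eventually.of_forall fun ω => sq_nonneg _)
  have hVle : ∀ k, ∀ᵐ ω ∂μ, (μ[(X k) ^ 2 | ℱ (k - 1)]) ω ≤ R ^ 2 := by
    intro k
    have h1 : (X k) ^ 2 ≤ᵐ[μ] fun _ => R ^ 2 := by
      filter_upwards [hX2bdd k] with ω hω
      simpa using (abs_le.1 hω).2
    have h2 := condExp_mono (m := ℱ (k - 1)) (hX2int k) (integrable_const _) h1
    filter_upwards [h2] with ω hω
    calc (μ[(X k) ^ 2 | ℱ (k - 1)]) ω ≤ (μ[(fun _ => R ^ 2 : Ω → ℝ) | ℱ (k - 1)]) ω := hω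
    _ = R ^ 2 := by rw [condExp_const (ℱ.le (k - 1))]
  have hWgood : ∀ᵐ ω ∂μ, 0 ≤ (∑ k ∈ Icc 1 n, (μ[(X k) ^ 2 | ℱ (k - 1)]) ω)
      ∧ (∑ k ∈ Icc 1 n, (μ[(X k) ^ 2 | ℱ (k - 1)]) ω) ≤ n * R ^ 2 := by
    have hb1 : ∀ᵐ ω ∂μ, ∀ k ∈ Icc 1 n, 0 ≤ (μ[(X k) ^ 2 | ℱ (k - 1)]) ω :=
      (ae_ball_iff (Icc 1 n).countable_toSet).2 fun k _ => hVnonneg k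
    have hb2 : ∀ᵐ ω ∂μ, ∀ k ∈ Icc 1 n, (μ[(X k) ^ 2 | ℱ (k - 1)]) ω ≤ R ^ 2 :=
      (ae_ball_iff (Icc 1 n).countable_toSet).2 fun k _ => hVle k
    filter_upwards [hb1, hb2] with ω h1 h2
    refine ⟨Finset.sum_nonneg h1, ?_⟩
    calc (∑ k ∈ Icc 1 n, (μ[(X k) ^ 2 | ℱ (k - 1)]) ω)
        ≤ ∑ _k ∈ Icc 1 n, R ^ 2 := Finset.sum_le_sum h2
    _ = n * R ^ 2 := by simp [Nat.card_Icc]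
  have hS1 : n = 1 → ∀ᵐ ω ∂μ, |∑ k ∈ Icc 1 n, X k ω| ≤ R := by
    intro hn1'
    filter_upwards [hbdd 1] with ω hω
    rw [hn1']
    simpa [Finset.Icc_self] using hω
  have htailp : ∀ a b : ℝ, 0 < b → 2 * Real.sqrt (b * Real.log (3 * n / δ)) ≤ a →
      5 * R * Real.log (3 * n / δ) ≤ a →
      μ {ω | a ≤ ∑ k ∈ Icc 1 n, X k ω
        ∧ (∑ k ∈ Icc 1 n, (μ[(X k) ^ 2 | ℱ (k - 1)]) ω) ≤ b}
      ≤ ENNReal.ofReal (Real.exp (-Real.log (3 * n / δ))) := fun a b hb h1 h2 =>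
    freedman_onesided μ ℱ X R hR hadapted hmds hbdd a b _ hb hL1 h1 h2 n
  have htailm : ∀ a b : ℝ, 0 < b → 2 * Real.sqrt (b * Real.log (3 * n / δ)) ≤ a →
      5 * R * Real.log (3 * n / δ) ≤ a →
      μ {ω | a ≤ -(∑ k ∈ Icc 1 n, X k ω)
        ∧ (∑ k ∈ Icc 1 n, (μ[(X k) ^ 2 | ℱ (k - 1)]) ω) ≤ b} ≤
      ENNReal.ofReal (Real.exp (-Real.log (3 * n / δ))) := by
    intro a b hb h1 h2
    have hXneg2 : ∀ k : ℕ, (-X k) ^ 2 = (X k) ^ 2 := fun k => neg_sq _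
    have hmds' : ∀ k, 1 ≤ k → μ[(fun k => -X k) k | ℱ (k - 1)] =ᵐ[μ] 0 := by
      intro k hk
      refine (condExp_neg (X k) (ℱ (k - 1))).trans ?_
      filter_upwards [hmds k hk] with ω hω
      simp [hω]
    have h := freedman_onesided μ ℱ (fun k => -X k) R hR (fun k => (hadapted k).neg)
      hmds' (fun k => by filter_upwards [hbdd k] with ω hω; simpa using hω)
      a b _ hb hL1 h1 h2 n
    have hseteq : {ω | a ≤ ∑ k ∈ Icc 1 n, (-X k) ω
        ∧ (∑ k ∈ Icc 1 n, (μ[(-X k) ^ 2 | ℱ (k - 1)]) ω) ≤ b}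
        = {ω | a ≤ -(∑ k ∈ Icc 1 n, X k ω)
          ∧ (∑ k ∈ Icc 1 n, (μ[(X k) ^ 2 | ℱ (k - 1)]) ω) ≤ b} := by
      ext ω
      simp only [Set.mem_setOf_eq, Pi.neg_apply, hXneg2, Finset.sum_neg_distrib]
    rw [hseteq] at h
    exact h
  exact freedman_assemble μ (fun ω => ∑ k ∈ Icc 1 n, X k ω)
    (fun ω => ∑ k ∈ Icc 1 n, (μ[(X k) ^ 2 | ℱ (k - 1)]) ω)
    R (Real.log (3 * n / δ)) κ δ n hn hR hκ hδ0 hδ1 hL1 hexpL hWgood hS1 htailp htailm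
end
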